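/- For every α > 0 and q ∈ (1,∞) with α < 1 − 3/q, the planar radial stretch map φ(x) = x|x|^{α−1} on the unit disk 𝔻 does not belong to the fractional Sobolev space W^{1−1/q, q}(𝔻, ℝ²); that is, ∫_𝔻 ∫_𝔻 |φ(x) − φ(y)|^q / |x − y|^{q+1} dx dy = ∞. -/

import Mathlib

open MeasureTheory Metric
open scoped ENNReal NNReal

/-- The planar radial stretch `φ(x) = x |x|^{α−1}` (with `φ(0) = 0`). -/
noncomputable def radialStretch (α : ℝ) (x : EuclideanSpace ℝ (Fin 2)) :
    EuclideanSpace ℝ (Fin 2) := ‖x‖ ^ (α - 1) • x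

local notation "𝔼" => EuclideanSpace ℝ (Fin 2)

lemma rs_norm (α : ℝ) (hα : 0 < α) (x : 𝔼) : ‖radialStretch α x‖ = ‖x‖ ^ α := by
  rcases eq_or_ne x 0 with rfl | hx
  · simp [radialStretch, Real.zero_rpow hα.ne']
  · have hx0 : (0:ℝ) < ‖x‖ := norm_pos_iff.2 hx
    rw [radialStretch, norm_smul, Real.norm_eq_abs,
      abs_of_nonneg (Real.rpow_nonneg (norm_nonneg x) _)]
    calc ‖x‖ ^ (α - 1) * ‖x‖ = ‖x‖ ^ (α - 1) * ‖x‖ ^ (1:ℝ) := by rw [Real.rpow_one]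
    _ = ‖x‖ ^ (α - 1 + 1) := (Real.rpow_add hx0 _ _).symm
    _ = ‖x‖ ^ α := by ring_nf

lemma rs_lower {α : ℝ} (hα : 0 < α) (x y : 𝔼) (hxy : inner ℝ x y ≤ (0:ℝ)) :
    ‖x‖ ^ α ≤ ‖radialStretch α x - radialStretch α y‖ := by
  set a := radialStretch α x with ha
  set b := radialStretch α y with hb
  have hinner : inner ℝ a b ≤ (0:ℝ) := by
    rw [ha, hb, radialStretch, radialStretch, real_inner_smul_left, real_inner_smul_right]
    have h1 : 0 ≤ ‖x‖ ^ (α - 1) := Real.rpow_nonneg (norm_nonneg x) _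
    have h2 : 0 ≤ ‖y‖ ^ (α - 1) := Real.rpow_nonneg (norm_nonneg y) _
    exact mul_nonpos_of_nonneg_of_nonpos h1 (mul_nonpos_of_nonneg_of_nonpos h2 hxy)
  have hsq : ‖a‖ ^ 2 ≤ ‖a - b‖ ^ 2 := by
    have := @norm_sub_sq_real 𝔼 _ _ a b
    nlinarith [sq_nonneg ‖b‖]
  have : ‖a‖ ≤ ‖a - b‖ := by
    have := Real.sqrt_le_sqrt hsq
    rwa [Real.sqrt_sq (norm_nonneg a), Real.sqrt_sq (norm_nonneg _)] at this
  calc ‖x‖ ^ α = ‖a‖ := (rs_norm α hα x).symm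
  _ ≤ ‖a - b‖ := this

lemma half_measure (x : 𝔼) {r : ℝ} (hr : 0 ≤ r) :
    ENNReal.ofReal (r ^ 2 / 2) * volume (ball (0:𝔼) 1) ≤
      volume {y : 𝔼 | ‖y‖ ≤ r ∧ inner ℝ x y ≤ (0:ℝ)} := by
  set S : Set 𝔼 := {y : 𝔼 | ‖y‖ ≤ r ∧ inner ℝ x y ≤ (0:ℝ)} with hS
  have hsub : closedBall (0:𝔼) r ⊆ S ∪ (Neg.neg ⁻¹' S) := by
    intro y hy
    rw [mem_closedBall, dist_zero_right] at hy
    rcases le_or_gt (inner ℝ x y : ℝ) 0 with h | h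
    · exact Or.inl ⟨hy, h⟩
    · refine Or.inr ?_
      simp only [Set.mem_preimage, hS, Set.mem_setOf_eq, norm_neg, inner_neg_right]
      exact ⟨hy, by linarith⟩
  have hneg : volume (Neg.neg ⁻¹' S) = volume S :=
    Measure.measure_preimage_neg volume S
  have hcb : volume (closedBall (0:𝔼) r) = ENNReal.ofReal (r ^ 2) * volume (ball (0:𝔼) 1) := by
    rw [Measure.addHaar_closedBall volume (0:𝔼) hr, finrank_euclideanSpace_fin]
  have h2 : ENNReal.ofReal (r ^ 2) * volume (ball (0:𝔼) 1) ≤ 2 * volume S := by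
    calc ENNReal.ofReal (r ^ 2) * volume (ball (0:𝔼) 1) = volume (closedBall (0:𝔼) r) := hcb.symm
    _ ≤ volume (S ∪ (Neg.neg ⁻¹' S)) := measure_mono hsub
    _ ≤ volume S + volume (Neg.neg ⁻¹' S) := measure_union_le _ _
    _ = 2 * volume S := by rw [hneg, two_mul]
  have key : 2 * (ENNReal.ofReal (r ^ 2 / 2) * volume (ball (0:𝔼) 1)) ≤ 2 * volume S := by
    have : (2:ℝ≥0∞) * ENNReal.ofReal (r ^ 2 / 2) = ENNReal.ofReal (r ^ 2) := by
      rw [← ENNReal.ofReal_ofNat 2, ← ENNReal.ofReal_mul (by norm_num)]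
      congr 1; ring
    rw [← mul_assoc, this]; exact h2
  exact (ENNReal.mul_le_mul_iff_right (by norm_num) (by norm_num)).1 key

lemma rpow_arith {r : ℝ} (hr : 0 < r) (q a : ℝ) :
    r ^ a / (2 * r) ^ (q + 1) * (r ^ 2 / 2) = (2:ℝ) ^ (-(q + 2)) * r ^ (a + 1 - q) := by
  have h2 : (0:ℝ) < 2 := by norm_num
  have hmul : (2 * r) ^ (q + 1) = 2 ^ (q + 1) * r ^ (q + 1) :=
    Real.mul_rpow h2.le hr.le
  have hne1 : (2:ℝ) ^ (q + 1) ≠ 0 := (Real.rpow_pos_of_pos h2 _).ne'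
  have hne2 : r ^ (q + 1) ≠ 0 := (Real.rpow_pos_of_pos hr _).ne'
  have hr2 : r ^ (2:ℕ) = r ^ ((2:ℝ)) := (Real.rpow_natCast r 2).symm
  have e1 : r ^ (a + 1 - q) = r ^ a * r ^ ((2:ℝ)) / r ^ (q + 1) := by
    rw [← Real.rpow_add hr, ← Real.rpow_sub hr]; ring_nf
  have e2 : (2:ℝ) ^ (-(q + 2)) = ((2:ℝ) ^ (q + 1) * 2)⁻¹ := by
    rw [Real.rpow_neg h2.le]
    congr 1
    calc (2:ℝ) ^ (q + 2) = 2 ^ (q + 1 + 1) := by ring_nf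
    _ = 2 ^ (q + 1) * 2 ^ ((1:ℝ)) := Real.rpow_add h2 _ _
    _ = 2 ^ (q + 1) * 2 := by rw [Real.rpow_one]
  rw [hmul, hr2, e1, e2]
  field_simp

lemma inner_bound {q α : ℝ} (hq : 1 < q) (hα : 0 < α) (x : 𝔼)
    (hx : x ∈ ball (0:𝔼) 1) (hx0 : x ≠ 0) :
    ENNReal.ofReal (‖x‖ ^ (α * q + 1 - q)) *
      (ENNReal.ofReal ((2:ℝ) ^ (-(q + 2))) * volume (ball (0:𝔼) 1)) ≤
    ∫⁻ y in ball (0:𝔼) 1,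
      ENNReal.ofReal (‖radialStretch α x - radialStretch α y‖ ^ q / ‖x - y‖ ^ (q + 1)) := by
  set r := ‖x‖ with hrdef
  have hr : 0 < r := norm_pos_iff.2 hx0
  have hr1 : r < 1 := by rwa [mem_ball, dist_zero_right] at hx
  set S : Set 𝔼 := {y : 𝔼 | ‖y‖ ≤ r ∧ inner ℝ x y ≤ (0:ℝ)} with hSdef
  have hSmeas : MeasurableSet S := by
    have : S = (fun y : 𝔼 => ‖y‖) ⁻¹' Set.Iic r ∩ (fun y : 𝔼 => (inner ℝ x y : ℝ)) ⁻¹' Set.Iic 0 := by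
      ext y; simp [hSdef, Set.mem_setOf_eq]
    rw [this]
    exact (measurable_norm measurableSet_Iic).inter
      ((Continuous.inner continuous_const continuous_id).measurable measurableSet_Iic)
  have hSsub : S ⊆ ball (0:𝔼) 1 := by
    intro y hy
    rw [mem_ball, dist_zero_right]
    exact lt_of_le_of_lt hy.1 hr1
  set c : ℝ≥0∞ := ENNReal.ofReal (r ^ (α * q) / (2 * r) ^ (q + 1)) with hcdef
  have hpt : ∀ y ∈ S, c ≤
      ENNReal.ofReal (‖radialStretch α x - radialStretch α y‖ ^ q / ‖x - y‖ ^ (q + 1)) := by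
    intro y hy
    obtain ⟨hy1, hy2⟩ := hy
    have hxy : x ≠ y := by
      rintro rfl
      have : (0:ℝ) < inner ℝ x x := by
        rw [real_inner_self_eq_norm_sq]
        have : (0:ℝ) < ‖x‖ := norm_pos_iff.2 hx0
        positivity
      linarith
    have hd : 0 < ‖x - y‖ := norm_sub_pos_iff.2 hxy
    apply ENNReal.ofReal_le_ofReal
    have hnum : r ^ (α * q) ≤ ‖radialStretch α x - radialStretch α y‖ ^ q := by
      calc r ^ (α * q) = (r ^ α) ^ q := Real.rpow_mul (norm_nonneg x) _ _
      _ ≤ ‖radialStretch α x - radialStretch α y‖ ^ q :=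
        Real.rpow_le_rpow (Real.rpow_nonneg (norm_nonneg x) _) (rs_lower hα x y hy2)
          (by linarith)
    have hden : ‖x - y‖ ^ (q + 1) ≤ (2 * r) ^ (q + 1) := by
      apply Real.rpow_le_rpow (norm_nonneg _) _ (by linarith)
      calc ‖x - y‖ ≤ ‖x‖ + ‖y‖ := norm_sub_le x y
      _ ≤ r + r := by rw [← hrdef]; exact add_le_add le_rfl hy1
      _ = 2 * r := by ring
    exact div_le_div₀ (Real.rpow_nonneg (norm_nonneg _) _) hnum
      (Real.rpow_pos_of_pos hd _) hden
  calc
    ENNReal.ofReal (r ^ (α * q + 1 - q)) *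
        (ENNReal.ofReal ((2:ℝ) ^ (-(q + 2))) * volume (ball (0:𝔼) 1))
      = ENNReal.ofReal ((2:ℝ) ^ (-(q + 2)) * r ^ (α * q + 1 - q)) * volume (ball (0:𝔼) 1) := by
        rw [ENNReal.ofReal_mul (Real.rpow_nonneg (by norm_num : (0:ℝ) ≤ 2) _)]
        ring
    _ = ENNReal.ofReal (r ^ (α * q) / (2 * r) ^ (q + 1) * (r ^ 2 / 2)) *
          volume (ball (0:𝔼) 1) := by rw [rpow_arith hr]
    _ = c * (ENNReal.ofReal (r ^ 2 / 2) * volume (ball (0:𝔼) 1)) := by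
        rw [hcdef, ← mul_assoc, ← ENNReal.ofReal_mul
          (div_nonneg (Real.rpow_nonneg hr.le _) (Real.rpow_nonneg (by positivity) _))]
    _ ≤ c * volume S := mul_le_mul_right (half_measure x hr.le) c
    _ = ∫⁻ _ in S, c := (setLIntegral_const S c).symm
    _ ≤ ∫⁻ y in S,
          ENNReal.ofReal (‖radialStretch α x - radialStretch α y‖ ^ q / ‖x - y‖ ^ (q + 1)) :=
        setLIntegral_mono' hSmeas hpt
    _ ≤ ∫⁻ y in ball (0:𝔼) 1,
          ENNReal.ofReal (‖radialStretch α x - radialStretch α y‖ ^ q / ‖x - y‖ ^ (q + 1)) :=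
        lintegral_mono_set hSsub

lemma outer_div {p : ℝ} (hp : p + 2 < 0) {K : ℝ≥0∞} (hK : K ≠ 0) :
    ∫⁻ x in ball (0:𝔼) 1, ENNReal.ofReal (‖x‖ ^ p) * K = ⊤ := by
  set V := volume (ball (0:𝔼) 1) with hV
  have hVpos : V ≠ 0 := (measure_ball_pos volume 0 one_pos).ne'
  set rr : ℕ → ℝ := fun k => (1/2 : ℝ) ^ k with hrr
  have hrpos : ∀ k, 0 < rr k := fun k => by positivity
  have hrle1 : ∀ k, rr k ≤ 1 := fun k => pow_le_one₀ (by norm_num) (by norm_num)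
  have hrsucc : ∀ k, rr (k + 1) = rr k / 2 := fun k => by
    simp [hrr, pow_succ]; ring
  set A : ℕ → Set 𝔼 := fun k => ball 0 (rr k) \ ball 0 (rr (k + 1)) with hA
  have hAmeas : ∀ k, MeasurableSet (A k) :=
    fun k => measurableSet_ball.diff measurableSet_ball
  have hAmem : ∀ k x, x ∈ A k → rr (k + 1) ≤ ‖x‖ ∧ ‖x‖ < rr k := by
    intro k x hx
    obtain ⟨h1, h2⟩ := hx
    rw [mem_ball, dist_zero_right] at h1
    rw [mem_ball, dist_zero_right] at h2
    exact ⟨not_lt.1 h2, h1⟩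
  have hanti : ∀ {i j : ℕ}, i ≤ j → rr j ≤ rr i := fun {i j} hij =>
    pow_le_pow_of_le_one (by norm_num) (by norm_num) hij
  have hdisj : Pairwise (Function.onFun Disjoint A) := by
    intro i j hij
    wlog hlt : i < j generalizing i j
    · exact (this hij.symm (by omega)).symm
    rw [Function.onFun, Set.disjoint_left]
    intro x hxi hxj
    have h1 := hAmem i x hxi
    have h2 := hAmem j x hxj
    have : rr j ≤ rr (i + 1) := hanti hlt
    linarith [h1.1, h1.2, h2.1, h2.2]
  have hAsub : (⋃ k, A k) ⊆ ball (0:𝔼) 1 := by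
    intro x hx
    obtain ⟨k, hk⟩ := Set.mem_iUnion.1 hx
    have := (hAmem k x hk).2
    rw [mem_ball, dist_zero_right]
    exact lt_of_lt_of_le this (hrle1 k)
  have hvolA : ∀ k, ENNReal.ofReal (3 * rr k ^ 2 / 4) * V ≤ volume (A k) := by
    intro k
    have hb : volume (ball (0:𝔼) (rr (k+1))) = ENNReal.ofReal (rr (k+1) ^ 2) * V := by
      rw [hV, Measure.addHaar_ball volume (0:𝔼) (hrpos (k+1)).le, finrank_euclideanSpace_fin]
    have hb' : volume (ball (0:𝔼) (rr k)) = ENNReal.ofReal (rr k ^ 2) * V := by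
      rw [hV, Measure.addHaar_ball volume (0:𝔼) (hrpos k).le, finrank_euclideanSpace_fin]
    have hAeq : volume (A k) = volume (ball (0:𝔼) (rr k)) - volume (ball (0:𝔼) (rr (k+1))) := by
      rw [hA]
      refine measure_diff (ball_subset_ball (hanti (Nat.le_succ k)))
        measurableSet_ball.nullMeasurableSet (measure_ball_lt_top).ne
    rw [hAeq, hb, hb']
    apply ENNReal.le_sub_of_add_le_right (by
      exact ENNReal.mul_ne_top ENNReal.ofReal_ne_top (measure_ball_lt_top).ne)
    rw [← add_mul, ← ENNReal.ofReal_add (by positivity) (by positivity)]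
    apply mul_le_mul_left
    apply ENNReal.ofReal_le_ofReal
    rw [hrsucc k]
    ring_nf
    nlinarith [sq_nonneg (rr k)]
  have hterm : ∀ k, ENNReal.ofReal (3/4) * K * V ≤
      ∫⁻ x in A k, ENNReal.ofReal (‖x‖ ^ p) * K := by
    intro k
    have hpt : ∀ x ∈ A k, ENNReal.ofReal ((rr k) ^ p) * K ≤ ENNReal.ofReal (‖x‖ ^ p) * K := by
      intro x hx
      obtain ⟨h1, h2⟩ := hAmem k x hx
      have hxpos : 0 < ‖x‖ := lt_of_lt_of_le (hrpos (k+1)) h1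
      exact mul_le_mul_left (ENNReal.ofReal_le_ofReal
        (Real.rpow_le_rpow_of_nonpos hxpos h2.le (by linarith))) K
    calc ENNReal.ofReal (3/4) * K * V
        ≤ ENNReal.ofReal ((rr k) ^ p) * K * (ENNReal.ofReal (3 * rr k ^ 2 / 4) * V) := by
          rw [mul_comm (ENNReal.ofReal ((rr k) ^ p)) K, mul_assoc K, ← mul_assoc
            (ENNReal.ofReal ((rr k) ^ p)), ← ENNReal.ofReal_mul
            (Real.rpow_nonneg (hrpos k).le _), mul_comm (ENNReal.ofReal (3/4)) K, mul_assoc]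
          apply mul_le_mul_right
          apply mul_le_mul_left
          apply ENNReal.ofReal_le_ofReal
          have : (1:ℝ) ≤ rr k ^ p * rr k ^ 2 := by
            have h2r : (rr k : ℝ) ^ (2:ℕ) = rr k ^ ((2:ℝ)) := (Real.rpow_natCast _ 2).symm
            rw [h2r, ← Real.rpow_add (hrpos k)]
            exact Real.one_le_rpow_of_pos_of_le_one_of_nonpos (hrpos k) (hrle1 k) hp.le
          nlinarith
    _ ≤ ENNReal.ofReal ((rr k) ^ p) * K * volume (A k) :=
          mul_le_mul_right (hvolA k) _
    _ = ∫⁻ _ in A k, ENNReal.ofReal ((rr k) ^ p) * K := (setLIntegral_const _ _).symm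
    _ ≤ ∫⁻ x in A k, ENNReal.ofReal (‖x‖ ^ p) * K := setLIntegral_mono' (hAmeas k) hpt
  have hsum : (∫⁻ x in ⋃ k, A k, ENNReal.ofReal (‖x‖ ^ p) * K) = ⊤ := by
    rw [lintegral_iUnion hAmeas hdisj]
    refine top_le_iff.1 ?_
    calc (⊤:ℝ≥0∞) = ∑' _ : ℕ, ENNReal.ofReal (3/4) * K * V :=
        (ENNReal.tsum_const_eq_top_of_ne_zero (by
          simp only [ne_eq, mul_eq_zero, not_or]
          refine ⟨⟨?_, hK⟩, hVpos⟩
          simp only [ENNReal.ofReal_eq_zero, not_le]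
          norm_num)).symm
    _ ≤ _ := ENNReal.tsum_le_tsum hterm
  refine top_le_iff.1 ?_
  rw [← hsum]
  exact lintegral_mono_set hAsub

/-- For `α > 0`, `q ∈ (1,∞)` with `α < 1 − 3/q`, the radial stretch does not belong to the
fractional Sobolev space `W^{1−1/q,q}(𝔻, ℝ²)`: its Gagliardo seminorm diverges. -/
theorem stmt_6 (q α : ℝ) (hq : 1 < q) (hα : 0 < α) (h : α < 1 - 3 / q) :
    (∫⁻ x in Metric.ball (0 : EuclideanSpace ℝ (Fin 2)) 1,
      ∫⁻ y in Metric.ball (0 : EuclideanSpace ℝ (Fin 2)) 1,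
        ENNReal.ofReal
          (‖radialStretch α x - radialStretch α y‖ ^ q / ‖x - y‖ ^ (q + 1))) = ⊤ := by
  have hq0 : (0:ℝ) < q := by linarith
  set p := α * q + 1 - q with hp
  have hp2 : p + 2 < 0 := by
    have : α * q < (1 - 3 / q) * q := by
      exact mul_lt_mul_of_pos_right h hq0
    have hqq : (1 - 3 / q) * q = q - 3 := by field_simp
    rw [hqq] at this
    simp only [hp]; linarith
  set K : ℝ≥0∞ := ENNReal.ofReal ((2:ℝ) ^ (-(q + 2))) * volume (ball (0:𝔼) 1) with hK
  have hKne : K ≠ 0 := by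
    simp only [hK, ne_eq, mul_eq_zero, not_or]
    constructor
    · simp only [ENNReal.ofReal_eq_zero, not_le]
      exact Real.rpow_pos_of_pos (by norm_num) _
    · exact (measure_ball_pos volume 0 one_pos).ne'
  refine top_le_iff.1 ?_
  rw [← outer_div hp2 hKne]
  apply setLIntegral_mono' measurableSet_ball
  intro x hx
  rcases eq_or_ne x 0 with rfl | hx0
  · have hpne : p ≠ 0 := by intro hc; rw [hc] at hp2; norm_num at hp2
    simp only [norm_zero, Real.zero_rpow hpne, ENNReal.ofReal_zero, zero_mul]
    exact zero_le
  · exact inner_bound hq hα x hx hx0
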